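/- For every i ∈ [k], the squared norm of the approximate centre satisfies (1/vol(S_i))·(1 − 1/Υ(k)) ≤ ‖p^(i)‖² ≤ 1/vol(S_i). -/

import Mathlib

open Finset
open scoped RealInnerProductSpace

/-- The volume of a vertex set: the sum of the degrees of its vertices. -/
noncomputable def gVol {V : Type*} (deg : V → ℝ) (S : Finset V) : ℝ := ∑ u ∈ S, deg u

/-- The total edge weight between two vertex sets. -/
noncomputable def gCut {V : Type*} (w : V → V → ℝ) (A B : Finset V) : ℝ :=
  ∑ u ∈ A, ∑ v ∈ B, w u v

/-- The conductance of a vertex set. -/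
noncomputable def gCond {V : Type*} [Fintype V] [DecidableEq V]
    (w : V → V → ℝ) (deg : V → ℝ) (S : Finset V) : ℝ :=
  gCut w S Sᶜ / min (gVol deg S) (gVol deg Sᶜ)

/-- `S : Fin k → Finset V` is a partition of `V` into `k` non-empty sets. -/
def IsPartition {V : Type*} [Fintype V] {k : ℕ} (S : Fin k → Finset V) : Prop :=
  (∀ i, (S i).Nonempty) ∧ (∀ i j, i ≠ j → Disjoint (S i) (S j)) ∧ ∀ v, ∃ i, v ∈ S i

/-- The vector `D^{1/2} χ_S`. -/
noncomputable def indVec {n : ℕ} (deg : Fin n → ℝ) (S : Finset (Fin n)) :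
    EuclideanSpace ℝ (Fin n) :=
  WithLp.toLp 2 (fun v => if v ∈ S then Real.sqrt (deg v) else 0)

/-- The normalised indicator vector `D^{1/2} χ_S / ‖D^{1/2} χ_S‖` of a cluster `S`. -/
noncomputable def gbarVec {n : ℕ} (deg : Fin n → ℝ) (S : Finset (Fin n)) :
    EuclideanSpace ℝ (Fin n) :=
  ‖indVec deg S‖⁻¹ • indVec deg S

/-- Bounds on the norm of the approximate cluster centres (Lemma 4.5). -/
theorem approx_centre_norm
    {n k : ℕ} (hk : 0 < k) (hkn : k < n)
    (w : Fin n → Fin n → ℝ)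
    (hsymm : ∀ u v, w u v = w v u)
    (hnonneg : ∀ u v, 0 ≤ w u v)
    (deg : Fin n → ℝ) (hdeg : ∀ u, deg u = ∑ v, w u v)
    (hdegpos : ∀ u, 0 < deg u)
    -- the normalised Laplacian `N = I - D^{-1/2} A D^{-1/2}`
    (N : Matrix (Fin n) (Fin n) ℝ)
    (hN : ∀ u v, N u v =
      (if u = v then (1 : ℝ) else 0) - w u v / (Real.sqrt (deg u) * Real.sqrt (deg v)))
    -- its eigenvalues `lam 0 ≤ … ≤ lam (n-1)` with orthonormal eigenvectors `f`
    (lam : Fin n → ℝ) (hlam : Monotone lam)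
    (f : Fin n → EuclideanSpace ℝ (Fin n))
    (hf : Orthonormal ℝ f)
    (heig : ∀ i, N.mulVec (f i) = lam i • (f i))
    -- `S` is a partition attaining the `k`-way expansion `ρ(k)`
    (S : Fin k → Finset (Fin n)) (hS : IsPartition S)
    (rho : ℝ)
    (hrho : rho = ⨆ i, gCond w deg (S i))
    (hopt : ∀ T : Fin k → Finset (Fin n), IsPartition T → rho ≤ ⨆ i, gCond w deg (T i))
    (hrhopos : 0 < rho)
    (hlampos : 0 < lam ⟨k, hkn⟩)
    -- `Υ(k) = λ_{k+1} / ρ(k)`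
    (Upsilon : ℝ) (hU : Upsilon = lam ⟨k, hkn⟩ / rho)
    -- the normalised indicator vectors of the clusters
    (gbar : Fin k → EuclideanSpace ℝ (Fin n))
    (hgbar : ∀ i, gbar i = gbarVec deg (S i))
    -- the approximate cluster centres `p^(i)(j) = ⟨f_j, ḡ_i⟩ / √vol(S_i)`
    (p : Fin k → EuclideanSpace ℝ (Fin k))
    (hp : ∀ i j, p i j = ⟪f (Fin.castLE hkn.le j), gbar i⟫ / Real.sqrt (gVol deg (S i))) :
    ∀ i : Fin k,
      (1 / gVol deg (S i)) * (1 - 1 / Upsilon) ≤ ‖p i‖ ^ 2 ∧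
        ‖p i‖ ^ 2 ≤ 1 / gVol deg (S i) := by
  have hn : 0 < n := hk.trans hkn
  haveI : Nonempty (Fin n) := ⟨⟨0, hn⟩⟩
  obtain ⟨hSne, hSdisj, hScov⟩ := hS
  have hsqrtpos : ∀ u, 0 < Real.sqrt (deg u) := fun u => Real.sqrt_pos.2 (hdegpos u)
  -- inner product is dot product
  have hid : ∀ x y : EuclideanSpace ℝ (Fin n), ⟪x, y⟫ = dotProduct x y := by
    intro x y
    simp [PiLp.inner_apply, RCLike.inner_apply, dotProduct]
    exact Finset.sum_congr rfl fun _ _ => mul_comm _ _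
  -- symmetry of N
  have hNsymm : ∀ u v, N u v = N v u := by
    intro u v
    rw [hN, hN, hsymm u v, mul_comm (Real.sqrt (deg u))]
    congr 1
    simp [eq_comm]
  have hdotsymm : ∀ x y : Fin n → ℝ, dotProduct x (N.mulVec y)
      = dotProduct (N.mulVec x) y := by
    intro x y
    simp only [dotProduct, Matrix.mulVec, Finset.mul_sum, Finset.sum_mul]
    rw [Finset.sum_comm]
    refine Finset.sum_congr rfl fun v _ => Finset.sum_congr rfl fun u _ => ?_
    rw [hNsymm u v]; ring
  -- positive semidefiniteness
  have hpsd : ∀ x : Fin n → ℝ, 0 ≤ dotProduct x (N.mulVec x) := by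
    intro x
    set y : Fin n → ℝ := fun u => x u / Real.sqrt (deg u) with hy
    have hdy : ∀ u, deg u * y u ^ 2 = x u ^ 2 := by
      intro u
      have h2 : Real.sqrt (deg u) ^ 2 = deg u := Real.sq_sqrt (hdegpos u).le
      rw [hy]
      simp only [div_pow, h2]
      rw [mul_comm, div_mul_eq_mul_div, mul_div_assoc, div_self (hdegpos u).ne', mul_one]
    have hA : ∀ u, ∑ v, w u v * y u ^ 2 = x u ^ 2 := by
      intro u
      rw [← Finset.sum_mul, ← hdeg u, hdy u]
    have hcross : ∀ u v, w u v / (Real.sqrt (deg u) * Real.sqrt (deg v)) * (x u * x v)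
        = w u v * (y u * y v) := by
      intro u v
      rw [hy]
      simp only
      field_simp
    have hlhs : dotProduct x (N.mulVec x)
        = (∑ u, x u ^ 2) - ∑ u, ∑ v, w u v * (y u * y v) := by
      simp only [dotProduct, Matrix.mulVec, Finset.mul_sum]
      rw [← Finset.sum_sub_distrib]
      refine Finset.sum_congr rfl fun u _ => ?_
      have : ∀ v, x u * (N u v * x v)
          = (if u = v then x u * x v else 0) - w u v * (y u * y v) := by
        intro v
        rw [hN, ← hcross u v]
        by_cases h : u = v <;> simp [h] <;> ring
      rw [Finset.sum_congr rfl fun v _ => this v, Finset.sum_sub_distrib,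
        Finset.sum_ite_eq Finset.univ u (fun v => x u * x v), if_pos (Finset.mem_univ u)]
      rw [← sq]
    have hB : ∑ u, ∑ v, w u v * y v ^ 2 = ∑ u, x u ^ 2 := by
      rw [Finset.sum_comm]
      refine Finset.sum_congr rfl fun v _ => ?_
      rw [← Finset.sum_mul]
      have : ∑ u, w u v = deg v := by
        rw [hdeg v]
        exact Finset.sum_congr rfl fun u _ => hsymm u v
      rw [this, hdy v]
    have hAA : ∑ u, ∑ v, w u v * y u ^ 2 = ∑ u, x u ^ 2 :=
      Finset.sum_congr rfl fun u _ => hA u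
    have hrhs : (1/2) * (∑ u, ∑ v, w u v * (y u - y v) ^ 2)
        = (∑ u, x u ^ 2) - ∑ u, ∑ v, w u v * (y u * y v) := by
      have expand : ∀ u v : Fin n, w u v * (y u - y v) ^ 2
          = (w u v * y u ^ 2 + w u v * y v ^ 2) - 2 * (w u v * (y u * y v)) := by
        intro u v; ring
      simp only [expand, Finset.sum_sub_distrib, Finset.sum_add_distrib, ← Finset.mul_sum]
      rw [hAA, hB]
      ring
    rw [hlhs, ← hrhs]
    have : 0 ≤ ∑ u, ∑ v, w u v * (y u - y v) ^ 2 :=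
      Finset.sum_nonneg fun u _ => Finset.sum_nonneg fun v _ =>
        mul_nonneg (hnonneg u v) (sq_nonneg _)
    linarith
  -- eigenvalues are nonnegative
  have hfdot : ∀ j, dotProduct (f j : Fin n → ℝ) (f j) = 1 := by
    intro j
    rw [← hid (f j) (f j), real_inner_self_eq_norm_mul_norm, hf.1 j, mul_one]
  have hlamnn : ∀ j, 0 ≤ lam j := by
    intro j
    have h1 := hpsd (f j)
    rw [heig j] at h1
    simp only [dotProduct, Pi.smul_apply, smul_eq_mul] at h1
    have h3 : (∑ v, f j v * (lam j * f j v)) = lam j * ∑ v, f j v * f j v := by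
      rw [Finset.mul_sum]; exact Finset.sum_congr rfl fun v _ => by ring
    have h4 := hfdot j
    simp only [dotProduct] at h4
    rw [h3, h4, mul_one] at h1
    exact h1
  -- orthonormal basis from f
  have hcard : Fintype.card (Fin n) = Module.finrank ℝ (EuclideanSpace ℝ (Fin n)) := by simp
  have hspan : ⊤ ≤ Submodule.span ℝ (Set.range f) := by
    rw [← coe_basisOfLinearIndependentOfCardEqFinrank hf.linearIndependent hcard]
    exact (basisOfLinearIndependentOfCardEqFinrank hf.linearIndependent hcard).span_eq.ge
  set b : OrthonormalBasis (Fin n) ℝ (EuclideanSpace ℝ (Fin n)) := OrthonormalBasis.mk hf hspan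
    with hbdef
  have hb : ∀ j, b j = f j := fun j => by rw [hbdef]; simp [OrthonormalBasis.coe_mk]
  have hscale : ∀ (a : ℝ) (x : Fin n → ℝ),
      dotProduct (fun v => a * x v) (N.mulVec (fun v => a * x v))
        = a * a * dotProduct x (N.mulVec x) := by
    intro a x
    simp only [dotProduct, Matrix.mulVec, Finset.mul_sum, Finset.sum_mul]
    refine Finset.sum_congr rfl fun u _ => ?_
    exact Finset.sum_congr rfl fun v _ => by ring
  intro i
  set Si := S i with hSi
  set vol := gVol deg Si with hvol
  have hvolpos : 0 < vol := Finset.sum_pos (fun u _ => hdegpos u) (hSne i)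
  set g := gbar i with hgdef
  -- the indicator vector
  have hindself : dotProduct (indVec deg Si : Fin n → ℝ) (indVec deg Si) = vol := by
    simp only [dotProduct, indVec]
    have h1 : ∀ v : Fin n, (if v ∈ Si then Real.sqrt (deg v) else 0)
        * (if v ∈ Si then Real.sqrt (deg v) else 0) = if v ∈ Si then deg v else 0 := by
      intro v; by_cases h : v ∈ Si <;> simp [h, Real.mul_self_sqrt (hdegpos v).le]
    rw [Finset.sum_congr rfl fun v _ => h1 v, Finset.sum_ite_mem, Finset.univ_inter, hvol, gVol]
  have hindnorm : ‖indVec deg Si‖ = Real.sqrt vol := by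
    have h1 : ⟪indVec deg Si, indVec deg Si⟫ = vol := by
      rw [hid]; exact hindself
    rw [real_inner_self_eq_norm_mul_norm] at h1
    rw [← h1, Real.sqrt_mul_self (norm_nonneg _)]
  have hsvpos : 0 < Real.sqrt vol := Real.sqrt_pos.2 hvolpos
  have hgfun : g = fun v => (Real.sqrt vol)⁻¹ * indVec deg Si v := by
    rw [hgdef, hgbar i, gbarVec, hindnorm]
    funext v
    simp [PiLp.smul_apply]
    exact Or.inl rfl
  have hgnorm1 : ‖g‖ = 1 := by
    rw [hgdef, hgbar i, gbarVec, norm_smul, norm_inv, norm_norm, hindnorm,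
      inv_mul_cancel₀ hsvpos.ne']
  set c : Fin n → ℝ := fun j => ⟪f j, g⟫ with hc
  have hc2nn : ∀ j, 0 ≤ c j * c j := fun j => mul_self_nonneg _
  have hpars : ∑ j, c j * c j = 1 := by
    have h1 := b.sum_inner_mul_inner g g
    have h2 : ∀ j : Fin n, ⟪g, b j⟫ * ⟪b j, g⟫ = c j * c j := by
      intro j
      rw [hb j]
      simp only [hc]
      rw [real_inner_comm g (f j)]
    rw [Finset.sum_congr rfl fun j _ => h2 j] at h1
    rw [h1, real_inner_self_eq_norm_mul_norm, hgnorm1, mul_one]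
  set Ng : EuclideanSpace ℝ (Fin n) := WithLp.toLp 2 (N.mulVec g) with hNgdef
  have hfNg : ∀ j, ⟪f j, Ng⟫ = lam j * c j := by
    intro j
    rw [hid]
    have h1 : dotProduct (f j : Fin n → ℝ) (N.mulVec g)
        = dotProduct (N.mulVec (f j)) g := hdotsymm _ _
    rw [heig j] at h1
    have h2 : dotProduct (lam j • (f j : Fin n → ℝ)) g
        = lam j * dotProduct (f j) g := by
      simp only [dotProduct, Pi.smul_apply, smul_eq_mul, Finset.mul_sum]
      exact Finset.sum_congr rfl fun v _ => by ring
    rw [hNgdef, h1, h2, ← hid]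
  have hQ1 : ⟪g, Ng⟫ = ∑ j, lam j * (c j * c j) := by
    rw [← b.sum_inner_mul_inner g Ng]
    refine Finset.sum_congr rfl fun j _ => ?_
    rw [hb j, hfNg j, real_inner_comm (f j) g]
    simp only [hc]
    ring
  -- quadratic form of the indicator vector equals the cut
  have hstep2 : ∀ u v : Fin n, Real.sqrt (deg u) * (N u v * Real.sqrt (deg v))
      = (if u = v then deg u else 0) - w u v := by
    intro u v
    rw [hN]
    have hsu := (hsqrtpos u).ne'
    have hsv := (hsqrtpos v).ne'
    rw [sub_mul, mul_sub]
    congr 1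
    · by_cases h : u = v
      · subst h
        rw [if_pos rfl, if_pos rfl, one_mul, Real.mul_self_sqrt (hdegpos u).le]
      · rw [if_neg h, if_neg h, zero_mul, mul_zero]
    · field_simp
      try ring
  have hcutform : dotProduct (indVec deg Si : Fin n → ℝ) (N.mulVec (indVec deg Si))
      = gCut w Si Siᶜ := by
    have hstep1 : dotProduct (indVec deg Si : Fin n → ℝ) (N.mulVec (indVec deg Si))
        = ∑ u ∈ Si, ∑ v ∈ Si, Real.sqrt (deg u) * (N u v * Real.sqrt (deg v)) := by
      simp only [dotProduct, Matrix.mulVec, indVec, mul_ite, mul_zero, ite_mul, zero_mul,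
        Finset.sum_ite_mem, Finset.univ_inter]
      refine Finset.sum_congr rfl fun u hu => ?_
      rw [Finset.mul_sum]
    have hstep3 : ∑ u ∈ Si, ∑ v ∈ Si, ((if u = v then deg u else 0) - w u v)
        = vol - ∑ u ∈ Si, ∑ v ∈ Si, w u v := by
      rw [Finset.sum_congr rfl fun u (hu : u ∈ Si) => Finset.sum_sub_distrib _ _,
        Finset.sum_sub_distrib]
      congr 1
      rw [hvol, gVol]
      refine Finset.sum_congr rfl fun u hu => ?_
      rw [Finset.sum_ite_eq Si u (fun _ => deg u), if_pos hu]
    have hcutid : gCut w Si Siᶜ = vol - ∑ u ∈ Si, ∑ v ∈ Si, w u v := by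
      rw [gCut, hvol, gVol, ← Finset.sum_sub_distrib]
      refine Finset.sum_congr rfl fun u hu => ?_
      have h1 := Finset.sum_add_sum_compl Si (w u)
      rw [← hdeg u] at h1
      linarith
    rw [hstep1, Finset.sum_congr rfl fun u _ => Finset.sum_congr rfl fun v _ => hstep2 u v,
      hstep3, hcutid]
  have hQform : ⟪g, Ng⟫ = gCut w Si Siᶜ / vol := by
    rw [hid, hNgdef]
    rw [hgfun, hscale ((Real.sqrt vol)⁻¹) (indVec deg Si), hcutform, ← mul_inv,
      Real.mul_self_sqrt hvolpos.le]
    rw [inv_mul_eq_div]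
  have hcutnn : 0 ≤ gCut w Si Siᶜ :=
    Finset.sum_nonneg fun u _ => Finset.sum_nonneg fun v _ => hnonneg u v
  have hQle : ⟪g, Ng⟫ ≤ rho := by
    rw [hQform]
    by_cases hcne : Siᶜ.Nonempty
    · have hvolc : 0 < gVol deg Siᶜ := Finset.sum_pos (fun u _ => hdegpos u) hcne
      have hmin : 0 < min vol (gVol deg Siᶜ) := lt_min hvolpos hvolc
      have h1 : gCut w Si Siᶜ / vol ≤ gCond w deg Si := by
        rw [gCond]
        exact div_le_div_of_nonneg_left hcutnn hmin (min_le_left _ _)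
      have h2 : gCond w deg Si ≤ rho := by
        rw [hrho]
        exact le_ciSup (f := fun j => gCond w deg (S j))
          (Set.Finite.bddAbove (Set.finite_range _)) i
      exact h1.trans h2
    · have h0 : Siᶜ = ∅ := Finset.not_nonempty_iff_eq_empty.1 hcne
      rw [gCut, h0]
      simp [hrhopos.le]
  -- the tail sum is small
  set T : Finset (Fin n) := Finset.univ.filter (fun j : Fin n => ¬ (j : ℕ) < k) with hT
  have htailnn : 0 ≤ ∑ j ∈ T, c j * c j := Finset.sum_nonneg fun j _ => hc2nn j
  have htail : ∑ j ∈ T, c j * c j ≤ rho / lam ⟨k, hkn⟩ := by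
    have h1 : lam ⟨k, hkn⟩ * ∑ j ∈ T, c j * c j ≤ ∑ j ∈ T, lam j * (c j * c j) := by
      rw [Finset.mul_sum]
      refine Finset.sum_le_sum fun j hj => ?_
      have hkj : lam ⟨k, hkn⟩ ≤ lam j := by
        apply hlam
        rw [Fin.le_def]
        simp only [hT, Finset.mem_filter, Finset.mem_univ, true_and, not_lt] at hj
        simpa using hj
      exact mul_le_mul_of_nonneg_right hkj (hc2nn j)
    have h2 : ∑ j ∈ T, lam j * (c j * c j) ≤ ∑ j, lam j * (c j * c j) :=
      Finset.sum_le_sum_of_subset_of_nonneg (Finset.subset_univ T)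
        (fun j _ _ => mul_nonneg (hlamnn j) (hc2nn j))
    have h3 : ∑ j, lam j * (c j * c j) ≤ rho := by rw [← hQ1]; exact hQle
    exact (le_div_iff₀ hlampos).2 (by rw [mul_comm]; exact h1.trans (h2.trans h3))
  -- relate the first k coefficients to the tail
  have hmapset : Finset.univ.map (Fin.castLEEmb hkn.le)
      = Finset.univ.filter (fun j : Fin n => (j : ℕ) < k) := by
    ext j
    simp only [Finset.mem_map, Finset.mem_univ, true_and, Finset.mem_filter]
    constructor
    · rintro ⟨a, rfl⟩
      exact a.isLt
    · intro h
      exact ⟨⟨(j : ℕ), h⟩, rfl⟩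
  have hsplit : ∑ j : Fin k, c (Fin.castLE hkn.le j) * c (Fin.castLE hkn.le j)
      = 1 - ∑ j ∈ T, c j * c j := by
    have h1 := Finset.sum_filter_add_sum_filter_not Finset.univ
      (fun j : Fin n => (j : ℕ) < k) (fun j => c j * c j)
    have h2 : ∑ j ∈ Finset.univ.filter (fun j : Fin n => (j : ℕ) < k), c j * c j
        = ∑ j : Fin k, c (Fin.castLE hkn.le j) * c (Fin.castLE hkn.le j) := by
      rw [← hmapset, Finset.sum_map]
      rfl
    rw [hpars] at h1
    rw [← h2, hT]
    linarith
  have hpnorm : ‖p i‖ ^ 2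
      = (∑ j : Fin k, c (Fin.castLE hkn.le j) * c (Fin.castLE hkn.le j)) / vol := by
    rw [← real_inner_self_eq_norm_sq, PiLp.inner_apply]
    simp only [RCLike.inner_apply, starRingEnd_apply, star_trivial]
    rw [Finset.sum_div]
    refine Finset.sum_congr rfl fun j _ => ?_
    rw [hp i j]
    simp only [hc]
    rw [div_mul_div_comm, Real.mul_self_sqrt hvolpos.le]
  have hUinv : 1 / Upsilon = rho / lam ⟨k, hkn⟩ := by rw [hU, one_div_div]
  constructor
  · rw [hpnorm, hsplit, hUinv]
    have h2 : (1 : ℝ) - rho / lam ⟨k, hkn⟩ ≤ 1 - ∑ j ∈ T, c j * c j := by linarith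
    calc (1 / vol) * (1 - rho / lam ⟨k, hkn⟩) = (1 - rho / lam ⟨k, hkn⟩) / vol := by ring
      _ ≤ (1 - ∑ j ∈ T, c j * c j) / vol := (div_le_div_iff_of_pos_right hvolpos).2 h2
  · rw [hpnorm, hsplit]
    have h2 : (1 : ℝ) - ∑ j ∈ T, c j * c j ≤ 1 := by linarith
    calc (1 - ∑ j ∈ T, c j * c j) / vol ≤ 1 / vol := (div_le_div_iff_of_pos_right hvolpos).2 h2
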